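/- With F and φ as in the Embedding Theorem (φ : F → ℝ((G)) defined by φ(m₀ a(m₁,…,mℓ)) = φ(m₀) · â(φ(m₁),…,φ(mℓ))), every f ∈ F admits a unique decomposition f = f_≻ + f_⪯ where φ(f_≻) has support entirely > 1 and φ(f_⪯) has support entirely ≤ 1, and both f_≻, f_⪯ lie in F. -/

import Mathlib

open Filter OrderDual

/-- Splitting: with `F` and the truncation closed ordered field embedding
`φ : F → ℝ((G))` as in the Embedding Theorem, every `f ∈ F` decomposes uniquely
(as germs) as `f = f_≻ + f_⪯` with `f_≻, f_⪯ ∈ F`, where `φ(f_≻)` is supported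
on monomials `> 1` and `φ(f_⪯)` on monomials `≤ 1`. -/
theorem stmt9 {G : Type*} [CommGroup G] [LinearOrder G] [IsOrderedMonoid G]
    (F : Set (ℝ → ℝ)) (φ : (ℝ → ℝ) → HahnSeries Gᵒᵈ ℝ)
    (hinj : ∀ f ∈ F, ∀ g ∈ F, φ f = φ g → f =ᶠ[atTop] g)
    (hadd : ∀ f ∈ F, ∀ g ∈ F, ∃ h ∈ F, h =ᶠ[atTop] (f + g) ∧ φ h = φ f + φ g)
    (hneg : ∀ f ∈ F, ∃ h ∈ F, h =ᶠ[atTop] (-f) ∧ φ h = -(φ f))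
    (htrunc : ∀ f ∈ F, ∀ g : G, ∃ fg ∈ F, ∀ h : G,
      (φ fg).coeff (toDual h) = if g < h then (φ f).coeff (toDual h) else 0) :
    ∀ f ∈ F, ∃ f₁ ∈ F, ∃ f₂ ∈ F,
      f =ᶠ[atTop] (f₁ + f₂) ∧ φ f = φ f₁ + φ f₂ ∧
      (∀ h : G, (φ f₁).coeff (toDual h) ≠ 0 → 1 < h) ∧
      (∀ h : G, (φ f₂).coeff (toDual h) ≠ 0 → h ≤ 1) ∧
      (∀ g₁ ∈ F, ∀ g₂ ∈ F, f =ᶠ[atTop] (g₁ + g₂) → φ f = φ g₁ + φ g₂ →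
        (∀ h : G, (φ g₁).coeff (toDual h) ≠ 0 → 1 < h) →
        (∀ h : G, (φ g₂).coeff (toDual h) ≠ 0 → h ≤ 1) →
        g₁ =ᶠ[atTop] f₁ ∧ g₂ =ᶠ[atTop] f₂) := by
  intro f hf
  obtain ⟨f₁, hf₁F, hf₁c⟩ := htrunc f hf 1
  obtain ⟨nf₁, hnf₁F, hnf₁e, hnf₁φ⟩ := hneg f₁ hf₁F
  obtain ⟨f₂, hf₂F, hf₂e, hf₂φ⟩ := hadd f hf nf₁ hnf₁F
  have hφf₂ : φ f₂ = φ f - φ f₁ := by rw [hf₂φ, hnf₁φ]; abel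
  refine ⟨f₁, hf₁F, f₂, hf₂F, ?_, ?_, ?_, ?_, ?_⟩
  · filter_upwards [hf₂e, hnf₁e] with x h2 hn
    simp only [Pi.add_apply] at *
    rw [h2, hn]; simp
  · rw [hφf₂]; abel
  · intro h hne
    rw [hf₁c h] at hne
    by_contra hc
    simp [hc] at hne
  · intro h hne
    rw [hφf₂] at hne
    simp only [HahnSeries.coeff_sub, Pi.sub_apply] at hne
    rw [hf₁c h] at hne
    by_contra hc
    push_neg at hc
    simp [hc] at hne
  · intro g₁ hg₁F g₂ hg₂F _ hsum h1 h2
    have key : φ g₁ = φ f₁ := by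
      ext hd
      obtain ⟨h, rfl⟩ : ∃ h : G, toDual h = hd := ⟨ofDual hd, rfl⟩
      by_contra hne
      have hd : (φ g₁).coeff (toDual h) - (φ f₁).coeff (toDual h) =
          (φ f₂).coeff (toDual h) - (φ g₂).coeff (toDual h) := by
        have := congrArg (fun s => s.coeff (toDual h)) hsum
        have h0 : φ f = φ f₁ + φ f₂ := by rw [hφf₂]; abel
        have := h0 ▸ this
        simp only [HahnSeries.coeff_add] at this
        linarith [this]
      rcases ne_or_eq ((φ g₁).coeff (toDual h)) 0 with hg | hg
      · have h1h := h1 h hg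
        have hf1 : (φ f₁).coeff (toDual h) = (φ f).coeff (toDual h) := by
          rw [hf₁c h, if_pos h1h]
        have hf2 : (φ f₂).coeff (toDual h) = 0 := by
          rw [hφf₂]; simp only [HahnSeries.coeff_sub, Pi.sub_apply, hf1]; ring
        have hg2 : (φ g₂).coeff (toDual h) ≠ 0 := by
          intro hz; rw [hf2, hz] at hd
          simp only [sub_zero] at hd
          exact hne (by linarith)
        exact absurd (h2 h hg2) (not_le.mpr h1h)
      · have hf1ne : (φ f₁).coeff (toDual h) ≠ 0 := fun hz => hne (by rw [hg, hz])
        have h1h : 1 < h := by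
          by_contra hc
          rw [hf₁c h, if_neg hc] at hf1ne
          exact hf1ne rfl
        have hg2 : (φ g₂).coeff (toDual h) = 0 := by
          by_contra hz
          exact absurd (h2 h hz) (not_le.mpr h1h)
        have hfz : (φ f).coeff (toDual h) = 0 := by
          have := congrArg (fun s => s.coeff (toDual h)) hsum
          simp only [HahnSeries.coeff_add, hg, hg2] at this
          simpa using this
        rw [hf₁c h, if_pos h1h, hfz] at hf1ne
        exact hf1ne rfl
    have key2 : φ g₂ = φ f₂ := by
      have h0 : φ f = φ f₁ + φ f₂ := by rw [hφf₂]; abel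
      have := hsum
      rw [h0, key] at this
      exact (add_left_cancel this.symm)
    exact ⟨hinj g₁ hg₁F f₁ hf₁F key, hinj g₂ hg₂F f₂ hf₂F key2⟩
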